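/- For 1 < σ ≤ 2, τ > 0, h > 0, there exist constants A₁ > 0 and B₁ ∈ ℝ such that T_{τ,σ,h}(k) ≤ A₁ · (ln_+ k)^{σ/(σ−1)} + B₁ for all k > 0, where T_{τ,σ,h}(k) = sup_{p∈ℕ} ln_+(h^{p^σ} k^p / p^{τ p^σ}). -/

import Mathlib

set_option maxHeartbeats 1000000

/-- For 1 < σ ≤ 2, τ > 0, h > 0, there are A₁ > 0, B₁ ∈ ℝ with
    T_{τ,σ,h}(k) ≤ A₁·(ln_+ k)^{σ/(σ−1)} + B₁ for all k > 0. -/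
theorem stmt_19 (τ σ h : ℝ) (hτ : 0 < τ) (hσ1 : 1 < σ) (hσ2 : σ ≤ 2) (hh : 0 < h)
    (M : ℕ → ℝ) (hM0 : M 0 = 1)
    (hM : ∀ p : ℕ, 1 ≤ p → M p = (p : ℝ) ^ (τ * (p : ℝ) ^ σ))
    (T : ℝ → ℝ)
    (hT : ∀ k : ℝ, T k = ⨆ p : ℕ, max 0 (Real.log (h ^ ((p : ℝ) ^ σ) * k ^ p / M p))) :
    ∃ A₁ : ℝ, 0 < A₁ ∧ ∃ B₁ : ℝ, ∀ k : ℝ, 0 < k →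
      T k ≤ A₁ * (max 0 (Real.log k)) ^ (σ / (σ - 1)) + B₁ := by
  have hσ0 : 0 < σ := lt_trans one_pos hσ1
  have hconj : σ.HolderConjugate (σ / (σ - 1)) := Real.HolderConjugate.conjExponent hσ1
  have hs1 : 1 < σ / (σ - 1) := hconj.symm.lt
  have hs0 : 0 < σ / (σ - 1) := lt_trans one_pos hs1
  -- constants
  obtain ⟨C, hC_def⟩ : ∃ x : ℝ, x = max 0 (Real.log h) := ⟨_, rfl⟩
  have hC : 0 ≤ C := hC_def ▸ le_max_left _ _
  have hlogh : Real.log h ≤ C := hC_def ▸ le_max_right _ _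
  obtain ⟨b, hb_def⟩ : ∃ x : ℝ, x = τ * Real.log 2 / 2 := ⟨_, rfl⟩
  have hb : 0 < b := by
    have : (0:ℝ) < Real.log 2 := Real.log_pos (by norm_num)
    rw [hb_def]; positivity
  obtain ⟨ε, hε_def⟩ : ∃ x : ℝ, x = (σ * b) ^ (1 / σ) := ⟨_, rfl⟩
  have hε : 0 < ε := by
    rw [hε_def]; exact Real.rpow_pos_of_pos (by positivity) _
  have hεσ : ε ^ σ = σ * b := by
    rw [hε_def, ← Real.rpow_mul (by positivity), one_div_mul_cancel hσ0.ne', Real.rpow_one]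
  obtain ⟨D, hD_def⟩ : ∃ x : ℝ, x = ε⁻¹ ^ (σ / (σ - 1)) / (σ / (σ - 1)) := ⟨_, rfl⟩
  have hD : 0 ≤ D := by
    rw [hD_def]; positivity
  -- threshold
  obtain ⟨P, hP_def⟩ : ∃ n : ℕ, n = max 2 ⌈Real.exp (2 * C / τ)⌉₊ := ⟨_, rfl⟩
  have hP2 : 2 ≤ P := hP_def ▸ le_max_left _ _
  have hPpos : (0:ℝ) < (P:ℝ) := by
    have : 0 < P := lt_of_lt_of_le (by norm_num) hP2
    exact_mod_cast this
  have hPexp : Real.exp (2 * C / τ) ≤ (P : ℝ) := by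
    calc Real.exp (2 * C / τ) ≤ (⌈Real.exp (2 * C / τ)⌉₊ : ℝ) := Nat.le_ceil _
    _ ≤ (P : ℝ) := by
        have : ⌈Real.exp (2 * C / τ)⌉₊ ≤ P := hP_def ▸ le_max_right _ _
        exact_mod_cast this
  refine ⟨D + (P : ℝ) + 1, by positivity, C * (P : ℝ) ^ σ + (P : ℝ), fun k hk => ?_⟩
  rw [hT k]
  set L : ℝ := max 0 (Real.log k) with hL_def
  have hL : 0 ≤ L := le_max_left _ _
  have hLk : Real.log k ≤ L := le_max_right _ _
  clear_value L
  have hLsnn : 0 ≤ L ^ (σ / (σ - 1)) := Real.rpow_nonneg hL _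
  have hPσ : (0:ℝ) < (P:ℝ) ^ σ := Real.rpow_pos_of_pos hPpos _
  have hRHS : 0 ≤ (D + (P:ℝ) + 1) * L ^ (σ / (σ - 1)) + (C * (P : ℝ) ^ σ + (P : ℝ)) := by
    positivity
  -- auxiliary: L ≤ L ^ s + 1
  have hLs : L ≤ L ^ (σ / (σ - 1)) + 1 := by
    rcases le_or_gt L 1 with hL1 | hL1
    · linarith
    · have h0 : L ^ (1:ℝ) ≤ L ^ (σ / (σ - 1)) :=
        Real.rpow_le_rpow_of_exponent_le hL1.le hs1.le
      rw [Real.rpow_one] at h0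
      linarith
  apply ciSup_le
  intro p
  apply max_le hRHS
  rcases Nat.eq_zero_or_pos p with hp0 | hp1
  · subst hp0
    simp only [Nat.cast_zero, Real.zero_rpow hσ0.ne', Real.rpow_zero, pow_zero, hM0]
    simpa using hRHS
  · -- p ≥ 1
    have hp1' : (1:ℝ) ≤ (p:ℝ) := by exact_mod_cast hp1
    have hpp : (0:ℝ) < (p:ℝ) := by linarith
    have hMp : M p = (p:ℝ) ^ (τ * (p:ℝ) ^ σ) := hM p hp1
    have hlogp : 0 ≤ Real.log p := Real.log_nonneg hp1'
    have hlog : Real.log (h ^ ((p : ℝ) ^ σ) * k ^ p / M p)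
        = (p:ℝ) ^ σ * Real.log h + (p:ℝ) * Real.log k - τ * (p:ℝ) ^ σ * Real.log p := by
      rw [hMp, Real.log_div (by positivity) (by positivity),
        Real.log_mul (by positivity) (by positivity),
        Real.log_rpow hh, Real.log_pow, Real.log_rpow hpp]
    rw [hlog]
    have hpσ : (0:ℝ) < (p:ℝ) ^ σ := Real.rpow_pos_of_pos hpp _
    have hstep : (p:ℝ) ^ σ * Real.log h + (p:ℝ) * Real.log k - τ * (p:ℝ) ^ σ * Real.log p
        ≤ (p:ℝ) ^ σ * C + (p:ℝ) * L - τ * (p:ℝ) ^ σ * Real.log p := by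
      have h1 := mul_le_mul_of_nonneg_left hlogh hpσ.le
      have h2 := mul_le_mul_of_nonneg_left hLk hpp.le
      linarith
    refine le_trans hstep ?_
    rcases lt_or_ge p P with hpP | hpP
    · -- small p
      have hple : (p:ℝ) ≤ (P:ℝ) := by exact_mod_cast hpP.le
      have hpσle : (p:ℝ) ^ σ ≤ (P:ℝ) ^ σ := Real.rpow_le_rpow hpp.le hple hσ0.le
      have h3 : 0 ≤ τ * (p:ℝ) ^ σ * Real.log p := by positivity
      have h4 : (p:ℝ) ^ σ * C ≤ (P:ℝ) ^ σ * C := mul_le_mul_of_nonneg_right hpσle hC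
      have h5 : (p:ℝ) * L ≤ (P:ℝ) * L := mul_le_mul_of_nonneg_right hple hL
      have h6 : (P:ℝ) * L ≤ (P:ℝ) * (L ^ (σ/(σ-1)) + 1) :=
        mul_le_mul_of_nonneg_left hLs hPpos.le
      nlinarith [mul_nonneg hD hLsnn, hLsnn]
    · -- large p
      have hPle : (P:ℝ) ≤ (p:ℝ) := by exact_mod_cast hpP
      have hlogP : 2 * C / τ ≤ Real.log p := by
        have h8 : Real.exp (2 * C / τ) ≤ (p:ℝ) := le_trans hPexp hPle
        have h9 := Real.log_le_log (Real.exp_pos _) h8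
        rwa [Real.log_exp] at h9
      have h2P : (2:ℝ) ≤ (P:ℝ) := by exact_mod_cast hP2
      have hlog2 : Real.log 2 ≤ Real.log p :=
        Real.log_le_log (by norm_num) (le_trans h2P hPle)
      have hCle : C ≤ τ / 2 * Real.log p := by
        rw [div_le_iff₀ hτ] at hlogP
        linarith
      have hkey : (p:ℝ) ^ σ * C - τ * (p:ℝ) ^ σ * Real.log p ≤ -b * (p:ℝ) ^ σ := by
        have h9 : (p:ℝ) ^ σ * C ≤ (p:ℝ) ^ σ * (τ / 2 * Real.log p) :=
          mul_le_mul_of_nonneg_left hCle hpσ.le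
        have h10 : (p:ℝ) ^ σ * (τ / 2 * Real.log 2) ≤ (p:ℝ) ^ σ * (τ / 2 * Real.log p) := by
          apply mul_le_mul_of_nonneg_left _ hpσ.le
          have h11 : (0:ℝ) < τ / 2 := by linarith
          exact mul_le_mul_of_nonneg_left hlog2 h11.le
        rw [hb_def]
        nlinarith
      -- Young
      have hyoung : (p:ℝ) * L ≤ b * (p:ℝ) ^ σ + D * L ^ (σ/(σ-1)) := by
        have hy := Real.young_inequality_of_nonneg (a := ε * (p:ℝ)) (b := L * ε⁻¹)
          (by positivity) (by positivity) hconj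
        have he1 : (ε * (p:ℝ)) ^ σ = ε ^ σ * (p:ℝ) ^ σ := Real.mul_rpow hε.le hpp.le
        have he2 : (L * ε⁻¹) ^ (σ/(σ-1)) = L ^ (σ/(σ-1)) * ε⁻¹ ^ (σ/(σ-1)) :=
          Real.mul_rpow hL (by positivity)
        have he3 : ε * (p:ℝ) * (L * ε⁻¹) = (p:ℝ) * L := by
          field_simp
        rw [he3, he1, he2, hεσ] at hy
        calc (p:ℝ) * L ≤ σ * b * (p:ℝ) ^ σ / σ + L ^ (σ/(σ-1)) * ε⁻¹ ^ (σ/(σ-1)) / (σ/(σ-1)) := hy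
        _ = b * (p:ℝ) ^ σ + D * L ^ (σ/(σ-1)) := by
            rw [hD_def]; field_simp
      have hfin : (p:ℝ) ^ σ * C + (p:ℝ) * L - τ * (p:ℝ) ^ σ * Real.log p
          ≤ D * L ^ (σ/(σ-1)) := by linarith
      refine le_trans hfin ?_
      nlinarith [mul_nonneg hC hPσ.le, hLsnn, mul_nonneg (add_nonneg hPpos.le zero_le_one) hLsnn]
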